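/- Assume the weights A are nonnegative and each φ_{i,j} is monotone nondecreasing. Then for all l, u ∈ ℝ^d with l_j ≤ u_j for all j, the alternating corner sum of the MDMA mixture F̂ over the box [l, u] is nonnegative (the d-increasing property of a multivariate CDF): Σ_{s ∈ {0,1}^d} (−1)^{d−|s|} F̂(v(s)) ≥ 0. -/
import Mathlib

private def boolFunEquivFinset (d : ℕ) : (Fin d → Bool) ≃ Finset (Fin d) where
  toFun s := Finset.univ.filter fun j => s j = true
  invFun t := fun j => decide (j ∈ t)
  left_inv s := by funext j; simp
  right_inv t := by ext j; simp

private lemma alt_sum_prod (d : ℕ) (f g : Fin d → ℝ) :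
    ∑ s : Fin d → Bool,
        (-1 : ℝ) ^ (d - (Finset.univ.filter fun j => s j = true).card)
          * ∏ j, (if s j then f j else g j)
      = ∏ j, (f j - g j) := by
  have h1 : (∏ j, (f j - g j)) = ∏ j, (f j + (-g j)) := by
    simp [sub_eq_add_neg]
  rw [h1, Fintype.prod_add]
  refine Fintype.sum_equiv (boolFunEquivFinset d) _ _ ?_
  intro s
  set t := Finset.univ.filter fun j => s j = true with ht
  have hcompl : tᶜ = Finset.univ.filter fun j => ¬ (s j = true) := by
    ext j; simp [ht]
  have hprod : (∏ j, (if s j then f j else g j))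
      = (∏ j ∈ t, f j) * ∏ j ∈ tᶜ, g j := by
    rw [hcompl, ht, ← Finset.prod_filter_mul_prod_filter_not Finset.univ
      (fun j => s j = true)]
    congr 1
    · exact Finset.prod_congr rfl (by intro j hj; simp at hj; simp [hj])
    · exact Finset.prod_congr rfl (by intro j hj; simp at hj; simp [hj])
  have hneg : (∏ j ∈ tᶜ, (-g j)) = (-1 : ℝ) ^ (tᶜ.card) * ∏ j ∈ tᶜ, g j := by
    have : (∏ j ∈ tᶜ, (-g j)) = ∏ j ∈ tᶜ, ((-1 : ℝ) * g j) := by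
      exact Finset.prod_congr rfl fun j _ => (neg_one_mul (g j)).symm
    rw [this, Finset.prod_mul_distrib, Finset.prod_const]
  have hcard : tᶜ.card = d - t.card := by
    rw [Finset.card_compl]; simp
  show (-1 : ℝ) ^ (d - t.card) * ∏ j, (if s j then f j else g j)
      = (∏ j ∈ t, f j) * ∏ j ∈ tᶜ, (-g j)
  rw [hprod, hneg, hcard]
  ring

/-- The d-increasing property: with nonnegative weights and monotone univariate CDFs,
the alternating corner sum of the MDMA mixture over any box `[l, u]` is nonnegative. -/
theorem mdma_d_increasing
    (d m : ℕ) (hd : 1 ≤ d) (hm : 1 ≤ m)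
    (φ : Fin m → Fin d → ℝ → ℝ) (A : (Fin d → Fin m) → ℝ)
    (hA : ∀ i, 0 ≤ A i)
    (hφ : ∀ i j, Monotone (φ i j))
    (Fhat : (Fin d → ℝ) → ℝ)
    (hFhat : ∀ x : Fin d → ℝ, Fhat x = ∑ i : Fin d → Fin m, A i * ∏ j, φ (i j) j (x j))
    (l u : Fin d → ℝ) (hlu : ∀ j, l j ≤ u j) :
    0 ≤ ∑ s : Fin d → Bool,
          (-1 : ℝ) ^ (d - (Finset.univ.filter fun j => s j = true).card)
            * Fhat (fun j => if s j then u j else l j) := by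
  have key : ∑ s : Fin d → Bool,
        (-1 : ℝ) ^ (d - (Finset.univ.filter fun j => s j = true).card)
          * Fhat (fun j => if s j then u j else l j)
      = ∑ i : Fin d → Fin m, A i * ∏ j, (φ (i j) j (u j) - φ (i j) j (l j)) := by
    simp only [hFhat, Finset.mul_sum]
    rw [Finset.sum_comm]
    refine Finset.sum_congr rfl fun i _ => ?_
    rw [← alt_sum_prod d (fun j => φ (i j) j (u j)) (fun j => φ (i j) j (l j)),
      Finset.mul_sum]
    refine Finset.sum_congr rfl fun s _ => ?_
    have : (∏ j, φ (i j) j (if s j then u j else l j))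
        = ∏ j, (if s j then φ (i j) j (u j) else φ (i j) j (l j)) := by
      refine Finset.prod_congr rfl fun j _ => ?_
      by_cases h : s j <;> simp [h]
    rw [this]; ring
  rw [key]
  refine Finset.sum_nonneg fun i _ => mul_nonneg (hA i) ?_
  exact Finset.prod_nonneg fun j _ => sub_nonneg.2 (hφ (i j) j (hlu j))
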